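/- Fix an integer n ≥ 1. For every point (z,w,t) ∈ M_n with t ≠ 0 one has Im(e^w/tⁿ) = 2·Re(1/tⁿ)·Im z. Consequently, the image point (−iz, −i·e^w/(2tⁿ), 1/tⁿ) lies on the quadric {(z',w',t') ∈ ℂ³ : Re w' = Re z' · Re t'}. -/

import Mathlib

open Complex

noncomputable section

/-- The hypersurface `M_n ⊂ ℂ³`. -/
def Mn (n : ℕ) : Set (ℂ × ℂ × ℂ) :=
  {p | -(Real.pi / 2) < p.2.1.im ∧ p.2.1.im < Real.pi / 2 ∧
    p.2.2.im = p.2.2.re *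
      Real.tan ((1 / (n : ℝ)) *
        Real.arctan ((Real.exp p.2.1.re * Real.sin p.2.1.im - 2 * p.1.im) /
          (Real.exp p.2.1.re * Real.cos p.2.1.im)))}

/-- Away from `{t = 0}`, the hypersurface `M_n` satisfies `Im(e^w/tⁿ) = 2 Re(1/tⁿ) Im z`,
and the map `(z,w,t) ↦ (−iz, −i e^w/(2tⁿ), 1/tⁿ)` sends it into the quadric
`Re w' = Re z' · Re t'`. -/
theorem Mn_spherical_part (n : ℕ) (hn : 1 ≤ n) (z w t : ℂ)
    (hM : (z, w, t) ∈ Mn n) (ht : t ≠ 0) :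
    (Complex.exp w / t ^ n).im = 2 * (1 / t ^ n).re * z.im ∧
    (-Complex.I * Complex.exp w / (2 * t ^ n)).re =
      (-Complex.I * z).re * (1 / t ^ n).re := by
  obtain ⟨h1, h2, h3⟩ := hM
  simp only at h1 h2 h3
  set x : ℝ := (Real.exp w.re * Real.sin w.im - 2 * z.im) /
      (Real.exp w.re * Real.cos w.im) with hx
  set θ : ℝ := Real.arctan x with hθ
  set θn : ℝ := (1 / (n : ℝ)) * θ with hθn
  have hn0 : (n : ℝ) ≠ 0 := by positivity
  have hθlt : -(Real.pi/2) < θ ∧ θ < Real.pi/2 :=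
    ⟨Real.neg_pi_div_two_lt_arctan x, Real.arctan_lt_pi_div_two x⟩
  have hθnlt : -(Real.pi/2) < θn ∧ θn < Real.pi/2 := by
    have h1n : (1:ℝ)/n ≤ 1 := by
      rw [div_le_one (by positivity)]; exact_mod_cast hn
    have h2n : (0:ℝ) < 1/n := by positivity
    constructor
    · rcases le_or_gt 0 θ with h | h
      · nlinarith [Real.pi_pos]
      · nlinarith
    · rcases le_or_gt 0 θ with h | h
      · nlinarith
      · nlinarith [Real.pi_pos]
  have hcosn : 0 < Real.cos θn := Real.cos_pos_of_mem_Ioo ⟨hθnlt.1, hθnlt.2⟩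
  have hcos : 0 < Real.cos θ := Real.cos_pos_of_mem_Ioo ⟨hθlt.1, hθlt.2⟩
  have htre : t.re ≠ 0 := by
    intro h0
    apply ht
    apply Complex.ext <;> simp [h0, h3]
  set r : ℝ := t.re / Real.cos θn with hr
  have hr0 : r ≠ 0 := div_ne_zero htre (ne_of_gt hcosn)
  have ht_eq : t = (r : ℂ) * ((Real.cos θn : ℂ) + (Real.sin θn : ℂ) * Complex.I) := by
    rw [hr]
    apply Complex.ext <;>
      simp only [Complex.mul_re, Complex.mul_im, Complex.add_re, Complex.add_im,
        Complex.ofReal_re, Complex.ofReal_im, Complex.I_re, Complex.I_im]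
    · field_simp; ring
    · rw [h3, Real.tan_eq_sin_div_cos]; field_simp; ring
  have hnθ : (n : ℝ) * θn = θ := by
    rw [hθn]; field_simp
  have htn : t ^ n = ((r ^ n : ℝ) : ℂ) * ((Real.cos θ : ℂ) + (Real.sin θ : ℂ) * Complex.I) := by
    have e1 : ((Real.cos θn : ℂ) + (Real.sin θn : ℂ) * Complex.I) = Complex.exp (θn * Complex.I) := by
      rw [Complex.exp_mul_I, Complex.ofReal_cos, Complex.ofReal_sin]
    have e2 : ((Real.cos θ : ℂ) + (Real.sin θ : ℂ) * Complex.I) = Complex.exp (θ * Complex.I) := by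
      rw [Complex.exp_mul_I, Complex.ofReal_cos, Complex.ofReal_sin]
    have e3 : ((n:ℂ) * ((θn : ℂ) * Complex.I)) = (θ : ℂ) * Complex.I := by
      rw [← hnθ]; push_cast; ring
    rw [ht_eq, mul_pow, e1, e2, ← Complex.exp_nat_mul, e3]
    norm_cast
  have htnre : (t ^ n).re = r ^ n * Real.cos θ := by
    rw [htn]
    simp only [Complex.mul_re, Complex.add_re, Complex.add_im, Complex.mul_im,
      Complex.ofReal_re, Complex.ofReal_im, Complex.I_re, Complex.I_im]
    ring
  have htnim : (t ^ n).im = r ^ n * Real.sin θ := by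
    rw [htn]
    simp only [Complex.mul_re, Complex.add_re, Complex.add_im, Complex.mul_im,
      Complex.ofReal_re, Complex.ofReal_im, Complex.I_re, Complex.I_im]
    ring
  have hns : Complex.normSq (t ^ n) = (r ^ n) ^ 2 := by
    rw [Complex.normSq_apply, htnre, htnim]
    nlinarith [Real.sin_sq_add_cos_sq θ]
  have hA : (0:ℝ) < Real.exp w.re * Real.cos w.im := by
    have : 0 < Real.cos w.im := Real.cos_pos_of_mem_Ioo ⟨h1, h2⟩
    positivity
  have htan : Real.sin θ * (Real.exp w.re * Real.cos w.im) =
      (Real.exp w.re * Real.sin w.im - 2 * z.im) * Real.cos θ := by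
    have h := Real.tan_arctan x
    rw [Real.tan_eq_sin_div_cos, hx] at h
    have h' : Real.sin θ * (Real.exp w.re * Real.cos w.im) =
        (Real.exp w.re * Real.sin w.im - 2 * z.im) * Real.cos θ :=
      (div_eq_div_iff (ne_of_gt hcos) (ne_of_gt hA)).mp h
    linarith [h']
  have hrn : (r:ℝ) ^ n ≠ 0 := pow_ne_zero n hr0
  have key : (Complex.exp w / t ^ n).im = 2 * (1 / t ^ n).re * z.im := by
    rw [Complex.div_im, one_div, Complex.inv_re, Complex.exp_re, Complex.exp_im,
      htnre, htnim, hns]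
    field_simp
    linear_combination (-1) * htan
  refine ⟨key, ?_⟩
  have h2' : -Complex.I * Complex.exp w / (2 * t ^ n) =
      (-Complex.I / 2) * (Complex.exp w / t ^ n) := by
    field_simp
  rw [h2']
  have hre : ∀ u : ℂ, ((-Complex.I / 2) * u).re = u.im / 2 := by
    intro u
    simp [Complex.mul_re, Complex.div_re, Complex.div_im, Complex.normSq_apply]
    ring
  rw [hre _, key]
  simp only [Complex.mul_re, Complex.neg_re, Complex.neg_im, Complex.I_re, Complex.I_im]
  ring

end
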